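/- arXiv:0811.0075 — 15 statements merged into one kernel-verified Lean document; each statement's English description precedes it below -/
import Mathlib

section
/- Fact 'R-down', first part: for every assignment I of small subsets as above (with no further assumptions), the two versions of the coherence condition (R↓) are equivalent: (a) for all X ⊆ U and all A, B ∈ I(X), A \ B ∈ I(X \ B); (b) for all X ⊆ U, all A ∈ F(X) and all B ∈ I(X), A \ B ∈ F(X \ B). -/
/-- The big subsets of `X` induced by a system `I` of small subsets:
`F(X) := {A ⊆ X : X \ A ∈ I(X)}`. -/
def bigSets {U : Type*} (I : Set U → Set (Set U)) (X : Set U) : Set (Set U) :=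
  {A | A ⊆ X ∧ X \ A ∈ I X}

/-- Fact "R-down", first part: the two versions of the coherence condition (R↓)
are equivalent:
(a) for all `X ⊆ U` and all `A, B ∈ I(X)`, `A \ B ∈ I(X \ B)`;
(b) for all `X ⊆ U`, all `A ∈ F(X)` and all `B ∈ I(X)`, `A \ B ∈ F(X \ B)`. -/
theorem rDown_versions_equiv {U : Type*} (I : Set U → Set (Set U))
    (hI : ∀ X A, A ∈ I X → A ⊆ X) :
    (∀ X A B : Set U, A ∈ I X → B ∈ I X → A \ B ∈ I (X \ B)) ↔
    (∀ X A B : Set U, A ∈ bigSets I X → B ∈ I X → A \ B ∈ bigSets I (X \ B)) := by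
  constructor
  · intro h X A B hA hB
    obtain ⟨hAX, hXA⟩ := hA
    refine ⟨fun x hx => ⟨hAX hx.1, hx.2⟩, ?_⟩
    have := h X (X \ A) B hXA hB
    have heq : (X \ B) \ (A \ B) = (X \ A) \ B := by ext x; simp; tauto
    rwa [heq]
  · intro h X A B hA hB
    have hAX := hI X A hA
    have hXA : X \ A ∈ bigSets I X := by
      refine ⟨Set.diff_subset, ?_⟩
      rwa [Set.diff_diff_cancel_left hAX]
    have := (h X (X \ A) B hXA hB).2
    have heq : (X \ B) \ ((X \ A) \ B) = A \ B := by
      ext x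
      simp only [Set.mem_diff]
      constructor
      · rintro ⟨⟨hxX, hxB⟩, h'⟩
        refine ⟨?_, hxB⟩
        by_contra hxA
        exact h' ⟨⟨hxX, hxA⟩, hxB⟩
      · rintro ⟨hxA, hxB⟩
        exact ⟨⟨hAX hxA, hxB⟩, fun h' => h'.1.2 hxA⟩
    rwa [heq] at this
end

section
/- Fact 'R-down', second part: for every assignment I of small subsets as above (with no further assumptions), the first two versions of the coherence condition (R↓↓) are equivalent: (a) for all X ⊆ U, all A ∈ I(X) and all B ⊆ X with B ∉ F(X), A \ B ∈ I(X \ B); (b) for all X ⊆ U, all A ∈ F(X) and all B ⊆ X with B ∉ F(X), A \ B ∈ F(X \ B). -/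
/-- Fact "R-down", second part: the first two versions of the coherence condition
(R↓↓) are equivalent:
(a) for all `X ⊆ U`, all `A ∈ I(X)` and all `B ⊆ X` with `B ∉ F(X)`,
    `A \ B ∈ I(X \ B)`;
(b) for all `X ⊆ U`, all `A ∈ F(X)` and all `B ⊆ X` with `B ∉ F(X)`,
    `A \ B ∈ F(X \ B)`. -/
theorem rDownDown_versions_equiv {U : Type*} (I : Set U → Set (Set U))
    (hI : ∀ X A, A ∈ I X → A ⊆ X) :
    (∀ X A B : Set U, A ∈ I X → B ⊆ X → B ∉ bigSets I X → A \ B ∈ I (X \ B)) ↔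
    (∀ X A B : Set U, A ∈ bigSets I X → B ⊆ X → B ∉ bigSets I X →
      A \ B ∈ bigSets I (X \ B)) := by
  constructor
  · intro h X A B hA hB hBn
    obtain ⟨hAX, hXA⟩ := hA
    refine ⟨fun x hx => ⟨hAX hx.1, hx.2⟩, ?_⟩
    have : (X \ B) \ (A \ B) = (X \ A) \ B := by
      ext x; simp only [Set.mem_diff]; tauto
    rw [this]
    exact h X (X \ A) B hXA hB hBn
  · intro h X A B hA hB hBn
    have hAX := hI X A hA
    have hF : X \ A ∈ bigSets I X := by
      refine ⟨Set.diff_subset, ?_⟩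
      have : X \ (X \ A) = A := by
        ext x; simp only [Set.mem_diff]; constructor
        · rintro ⟨hx, h2⟩; by_contra hc; exact h2 ⟨hx, hc⟩
        · intro hx; exact ⟨hAX hx, fun h2 => h2.2 hx⟩
      rw [this]; exact hA
    have := (h X (X \ A) B hF hB hBn).2
    have heq : (X \ B) \ ((X \ A) \ B) = A \ B := by
      ext x; simp only [Set.mem_diff]; constructor
      · rintro ⟨⟨hx, hb⟩, h2⟩
        refine ⟨?_, hb⟩; by_contra hc; exact h2 ⟨⟨hx, hc⟩, hb⟩
      · rintro ⟨ha, hb⟩; exact ⟨⟨hAX ha, hb⟩, fun h2 => h2.1.2 ha⟩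
    rwa [heq] at this
end

section
/- Fact 'R-down', third version of (R↓↓): if I satisfies (I↓), then the condition 'for all X ⊆ U, all A ∈ I(X) and all B ⊆ X with B ∉ F(X), A \ B ∈ I(X \ B)' is equivalent to transitivity of medium-or-large size: for all A, X, Y ⊆ U, if A ∈ M⁺(X) and X ∈ M⁺(Y), then A ∈ M⁺(Y). -/
/-- The subsets of `X` of at-least-medium size:
`M⁺(X) := {A ⊆ X : A ∉ I(X)}`. -/
def mediumPlusSets {U : Type*} (I : Set U → Set (Set U)) (X : Set U) : Set (Set U) :=
  {A | A ⊆ X ∧ A ∉ I X}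

/-- Fact "R-down", third version of (R↓↓): if `I` satisfies (I↓) (downward closure
of smallness), then the condition "for all `X ⊆ U`, all `A ∈ I(X)` and all
`B ⊆ X` with `B ∉ F(X)`, `A \ B ∈ I(X \ B)`" is equivalent to transitivity of
medium-or-large size: for all `A, X, Y ⊆ U`, if `A ∈ M⁺(X)` and `X ∈ M⁺(Y)`,
then `A ∈ M⁺(Y)`. -/
theorem rDownDown_iff_mediumPlus_trans {U : Type*} (I : Set U → Set (Set U))
    (hI : ∀ X A, A ∈ I X → A ⊆ X)
    (hdown : ∀ X A B : Set U, A ⊆ B → B ⊆ X → B ∈ I X → A ∈ I X) :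
    (∀ X A B : Set U, A ∈ I X → B ⊆ X → B ∉ bigSets I X → A \ B ∈ I (X \ B)) ↔
    (∀ A X Y : Set U, A ∈ mediumPlusSets I X → X ∈ mediumPlusSets I Y →
      A ∈ mediumPlusSets I Y) := by
  constructor
  · intro h A X Y hAX hXY
    obtain ⟨hAsub, hAni⟩ := hAX
    obtain ⟨hXsub, hXni⟩ := hXY
    refine ⟨hAsub.trans hXsub, fun hAY => ?_⟩
    have hB : (Y \ X) ∉ bigSets I Y := by
      intro hb
      obtain ⟨-, hbi⟩ := hb
      rw [Set.diff_diff_cancel_left hXsub] at hbi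
      exact hXni hbi
    have := h Y A (Y \ X) hAY Set.diff_subset hB
    rw [Set.diff_diff_cancel_left hXsub] at this
    have heq : A \ (Y \ X) = A := by
      ext x; simp only [Set.mem_diff]
      exact ⟨fun ⟨hx, _⟩ => hx, fun hx => ⟨hx, fun ⟨_, hn⟩ => hn (hAsub hx)⟩⟩
    rw [heq] at this
    exact hAni this
  · intro h X A B hA hBX hBnb
    by_contra hcon
    have hXB : X \ B ∉ I X := fun hi => hBnb ⟨hBX, hi⟩
    have := h (A \ B) (X \ B) X
      ⟨Set.diff_subset_diff_left (hI X A hA), hcon⟩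
      ⟨Set.diff_subset, hXB⟩
    exact this.2 (hdown X (A \ B) A Set.diff_subset (hI X A hA) hA)
end

section
/- Proposition 'Ref-Class-Mu' (1.1): if the small-set system induced by f satisfies (R↑), then f satisfies (μwOR). -/
/-- `A` is a small subset of `X` (w.r.t. the choice function `f`):
`A ⊆ X` and `A ∩ f(X) = ∅`. -/
def smallOf {U : Type*} (f : Set U → Set U) (A X : Set U) : Prop :=
  A ⊆ X ∧ A ∩ f X = ∅

/-- Proposition "Ref-Class-Mu" (1.1): if the small-set system induced by `f`
satisfies (R↑), then `f` satisfies (μwOR). -/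
theorem refClassMu_1_1 {U : Type*} (f : Set U → Set U) (hf : ∀ X, f X ⊆ X)
    (hRup : ∀ X Y A : Set U, X ⊆ Y → smallOf f A X → smallOf f A Y) :
    ∀ X Y : Set U, f (X ∪ Y) ⊆ f X ∪ Y := by
  intro X Y x hx
  have hsmall : smallOf f (X \ f X) X := ⟨Set.diff_subset, by ext a; simp⟩
  have h2 := hRup X (X ∪ Y) (X \ f X) Set.subset_union_left hsmall
  have hxXY : x ∈ X ∪ Y := hf (X ∪ Y) hx
  rcases hxXY with hX | hY
  · by_cases hfx : x ∈ f X
    · exact Or.inl hfx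
    · exfalso
      have : x ∈ (X \ f X) ∩ f (X ∪ Y) := ⟨⟨hX, hfx⟩, hx⟩
      rw [h2.2] at this
      exact this
  · exact Or.inr hY
end

section
/- Proposition 'Ref-Class-Mu' (1.2): if f satisfies (μwOR), then the small-set system induced by f satisfies (R↑). -/
/-- Proposition "Ref-Class-Mu" (1.2): if `f` satisfies (μwOR), then the
small-set system induced by `f` satisfies (R↑). -/
theorem refClassMu_1_2 {U : Type*} (f : Set U → Set U) (hf : ∀ X, f X ⊆ X)
    (hwOR : ∀ X Y : Set U, f (X ∪ Y) ⊆ f X ∪ Y) :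
    ∀ X Y A : Set U, X ⊆ Y → smallOf f A X → smallOf f A Y := by
  intro X Y A hXY ⟨hAX, hAfX⟩
  refine ⟨hAX.trans hXY, Set.eq_empty_iff_forall_notMem.2 fun a ⟨haA, hafY⟩ => ?_⟩
  have hY : X ∪ (Y \ X) = Y := Set.union_diff_cancel hXY
  have := hwOR X (Y \ X)
  rw [hY] at this
  rcases this hafY with h | h
  · exact Set.eq_empty_iff_forall_notMem.1 hAfX a ⟨haA, h⟩
  · exact h.2 (hAX haA)
end

section
/- Proposition 'Ref-Class-Mu' (2.1): if the small-set system induced by f satisfies (R↑) and (I∪), then f satisfies (μOR). -/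
/-- Proposition "Ref-Class-Mu" (2.1): if the small-set system induced by `f`
satisfies (R↑) and (I∪), then `f` satisfies (μOR). -/
theorem refClassMu_2_1 {U : Type*} (f : Set U → Set U) (hf : ∀ X, f X ⊆ X)
    (hRup : ∀ X Y A : Set U, X ⊆ Y → smallOf f A X → smallOf f A Y)
    (hIcup : ∀ X A B : Set U, smallOf f A X → smallOf f B X → smallOf f (A ∪ B) X) :
    ∀ X Y : Set U, f (X ∪ Y) ⊆ f X ∪ f Y := by
  intro X Y x hx
  have hXsmall : smallOf f (X \ f X) X := by
    constructor
    · exact Set.diff_subset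
    · ext a; simp [Set.mem_diff]
  have hYsmall : smallOf f (Y \ f Y) Y := by
    constructor
    · exact Set.diff_subset
    · ext a; simp [Set.mem_diff]
  have h1 := hRup X (X ∪ Y) _ Set.subset_union_left hXsmall
  have h2 := hRup Y (X ∪ Y) _ Set.subset_union_right hYsmall
  have h3 := hIcup (X ∪ Y) _ _ h1 h2
  by_contra hcon
  have hxXY : x ∈ X ∪ Y := hf _ hx
  have : x ∈ (X \ f X ∪ Y \ f Y) ∩ f (X ∪ Y) := by
    refine ⟨?_, hx⟩
    rcases hxXY with h | h
    · exact Or.inl ⟨h, fun hc => hcon (Or.inl hc)⟩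
    · exact Or.inr ⟨h, fun hc => hcon (Or.inr hc)⟩
  rw [h3.2] at this
  exact this
end

section
/- Proposition 'Ref-Class-Mu' (2.2): if f satisfies (μOR), then the small-set system induced by f satisfies (R↑) and (I∪). -/
/-- Proposition "Ref-Class-Mu" (2.2): if `f` satisfies (μOR), then the
small-set system induced by `f` satisfies (R↑) and (I∪). -/
theorem refClassMu_2_2 {U : Type*} (f : Set U → Set U) (hf : ∀ X, f X ⊆ X)
    (hOR : ∀ X Y : Set U, f (X ∪ Y) ⊆ f X ∪ f Y) :
    (∀ X Y A : Set U, X ⊆ Y → smallOf f A X → smallOf f A Y) ∧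
    (∀ X A B : Set U, smallOf f A X → smallOf f B X → smallOf f (A ∪ B) X) := by
  constructor
  · rintro X Y A hXY ⟨hAX, hA⟩
    refine ⟨hAX.trans hXY, Set.eq_empty_iff_forall_notMem.2 ?_⟩
    rintro a ⟨haA, haf⟩
    have hY : Y = X ∪ (Y \ X) := by
      ext x; constructor
      · intro hx; by_cases h : x ∈ X <;> [exact Or.inl h; exact Or.inr ⟨hx, h⟩]
      · rintro (h | h); exacts [hXY h, h.1]
    rcases hOR X (Y \ X) (hY ▸ haf) with h | h
    · exact Set.eq_empty_iff_forall_notMem.1 hA a ⟨haA, h⟩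
    · exact (hf _ h).2 (hAX haA)
  · rintro X A B ⟨hAX, hA⟩ ⟨hBX, hB⟩
    refine ⟨Set.union_subset hAX hBX, ?_⟩
    rw [Set.union_inter_distrib_right, hA, hB, Set.union_empty]
end

section
/- Proposition 'Ref-Class-Mu' (3.1): if the small-set system induced by f satisfies (R↑) and (I∪), then f satisfies (μPR). -/
/-- Proposition "Ref-Class-Mu" (3.1): if the small-set system induced by `f`
satisfies (R↑) and (I∪), then `f` satisfies (μPR). -/
theorem refClassMu_3_1 {U : Type*} (f : Set U → Set U) (hf : ∀ X, f X ⊆ X)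
    (hRup : ∀ X Y A : Set U, X ⊆ Y → smallOf f A X → smallOf f A Y)
    (hIcup : ∀ X A B : Set U, smallOf f A X → smallOf f B X → smallOf f (A ∪ B) X) :
    ∀ X Y : Set U, X ⊆ Y → f Y ∩ X ⊆ f X := by
  intro X Y hXY x hx
  by_contra hxf
  have hsmall : smallOf f {x} X := by
    constructor
    · simp [hx.2]
    · ext y
      simp only [Set.mem_inter_iff, Set.mem_singleton_iff, Set.mem_empty_iff_false, iff_false,
        not_and]
      rintro rfl
      exact hxf
  have := (hRup X Y {x} hXY hsmall).2
  have : x ∈ ({x} : Set U) ∩ f Y := ⟨rfl, hx.1⟩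
  simp_all
end

section
/- Proposition 'Ref-Class-Mu' (4.1): if the small-set system induced by f satisfies (R∪disj), then f satisfies (μdisjOR). -/
/-- Proposition "Ref-Class-Mu" (4.1): if the small-set system induced by `f`
satisfies (R∪disj), then `f` satisfies (μdisjOR). -/
theorem refClassMu_4_1 {U : Type*} (f : Set U → Set U) (hf : ∀ X, f X ⊆ X)
    (hRdisj : ∀ A B X Y : Set U, smallOf f A X → smallOf f B Y → X ∩ Y = ∅ →
      smallOf f (A ∪ B) (X ∪ Y)) :
    ∀ X Y : Set U, X ∩ Y = ∅ → f (X ∪ Y) ⊆ f X ∪ f Y := by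
  intro X Y hXY x hx
  have hA : smallOf f (X \ f X) X :=
    ⟨Set.diff_subset, by ext a; simp⟩
  have hB : smallOf f (Y \ f Y) Y :=
    ⟨Set.diff_subset, by ext a; simp⟩
  have h := hRdisj _ _ _ _ hA hB hXY
  by_contra hc
  have hxU : x ∈ X ∪ Y := hf _ hx
  have hmem : x ∈ (X \ f X) ∪ (Y \ f Y) := by
    rcases hxU with h1 | h1
    · exact Or.inl ⟨h1, fun h2 => hc (Or.inl h2)⟩
    · exact Or.inr ⟨h1, fun h2 => hc (Or.inr h2)⟩
  have := h.2
  have : x ∈ ((X \ f X) ∪ (Y \ f Y)) ∩ f (X ∪ Y) := ⟨hmem, hx⟩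
  rw [h.2] at this
  exact this
end

section
/- Proposition 'Ref-Class-Mu' (5.1): if the small-set system induced by f satisfies (R↓), then f satisfies (μCM). -/
/-- Proposition "Ref-Class-Mu" (5.1): if the small-set system induced by `f`
satisfies (R↓), then `f` satisfies (μCM). -/
theorem refClassMu_5_1 {U : Type*} (f : Set U → Set U) (hf : ∀ X, f X ⊆ X)
    (hRdown : ∀ X A B : Set U, smallOf f A X → smallOf f B X →
      smallOf f (A \ B) (X \ B)) :
    ∀ X Y : Set U, f X ⊆ Y → Y ⊆ X → f Y ⊆ f X := by
  intro X Y hfXY hYX x hxfY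
  by_contra hx
  have hxY : x ∈ Y := hf Y hxfY
  have hA : smallOf f ({x} ∪ (X \ Y)) X := by
    constructor
    · intro y hy
      rcases hy with hy | hy
      · simp only [Set.mem_singleton_iff] at hy; exact hy ▸ hYX hxY
      · exact hy.1
    · ext y
      simp only [Set.mem_inter_iff, Set.mem_union, Set.mem_singleton_iff,
        Set.mem_diff, Set.mem_empty_iff_false, iff_false]
      rintro ⟨hy | ⟨_, hyY⟩, hyfX⟩
      · exact hx (hy ▸ hyfX)
      · exact hyY (hfXY hyfX)
  have hB : smallOf f (X \ Y) X := by
    refine ⟨Set.diff_subset, ?_⟩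
    ext y
    simp only [Set.mem_inter_iff, Set.mem_diff, Set.mem_empty_iff_false, iff_false]
    rintro ⟨⟨_, hyY⟩, hyfX⟩
    exact hyY (hfXY hyfX)
  have h := hRdown X _ _ hA hB
  have hXY : X \ (X \ Y) = Y := by
    rw [Set.diff_diff_right, Set.diff_self, Set.empty_union, Set.inter_eq_right.mpr hYX]
  rw [hXY] at h
  have hxmem : x ∈ ({x} ∪ (X \ Y)) \ (X \ Y) := ⟨Or.inl rfl, fun h' => h'.2 hxY⟩
  have := h.2
  have : x ∈ (({x} ∪ (X \ Y)) \ (X \ Y)) ∩ f Y := ⟨hxmem, hxfY⟩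
  rw [h.2] at this
  exact this
end

section
/- Proposition 'Ref-Class-Mu' (5.2): if f satisfies (μCM), then the small-set system induced by f satisfies (R↓). -/
/-- Proposition "Ref-Class-Mu" (5.2): if `f` satisfies (μCM), then the
small-set system induced by `f` satisfies (R↓). -/
theorem refClassMu_5_2 {U : Type*} (f : Set U → Set U) (hf : ∀ X, f X ⊆ X)
    (hCM : ∀ X Y : Set U, f X ⊆ Y → Y ⊆ X → f Y ⊆ f X) :
    ∀ X A B : Set U, smallOf f A X → smallOf f B X →
      smallOf f (A \ B) (X \ B) := by
  rintro X A B ⟨hAX, hAf⟩ ⟨hBX, hBf⟩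
  have hfX : f X ⊆ X \ B := fun x hx =>
    ⟨hf X hx, fun hxB => Set.eq_empty_iff_forall_notMem.mp hBf x ⟨hxB, hx⟩⟩
  have h := hCM X (X \ B) hfX Set.diff_subset
  constructor
  · exact Set.diff_subset_diff_left hAX
  · ext x
    simp only [Set.mem_inter_iff, Set.mem_diff, Set.mem_empty_iff_false, iff_false]
    rintro ⟨⟨hxA, -⟩, hxf⟩
    exact Set.eq_empty_iff_forall_notMem.mp hAf x ⟨hxA, h hxf⟩
end

section
/- Proposition 'Ref-Class-Mu' (6.1): if the small-set system induced by f satisfies (R↓↓), then f satisfies (μRatM). -/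
/-- Proposition "Ref-Class-Mu" (6.1): if the small-set system induced by `f`
satisfies (R↓↓), then `f` satisfies (μRatM). -/
theorem refClassMu_6_1 {U : Type*} (f : Set U → Set U) (hf : ∀ X, f X ⊆ X)
    (hRdd : ∀ X A B : Set U, smallOf f A X → B ⊆ X → ¬ f X ⊆ B →
      smallOf f (A \ B) (X \ B)) :
    ∀ X Y : Set U, X ⊆ Y → X ∩ f Y ≠ ∅ → f X ⊆ f Y ∩ X := by
  intro X Y hXY hne
  obtain ⟨y, hyX, hyfY⟩ := Set.nonempty_iff_ne_empty.mpr hne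
  have hA : smallOf f (Y \ f Y) Y := ⟨Set.diff_subset, by ext z; simp⟩
  have hnB : ¬ f Y ⊆ Y \ X := fun h => (h hyfY).2 hyX
  have hsmall := hRdd Y (Y \ f Y) (Y \ X) hA Set.diff_subset hnB
  have hYB : Y \ (Y \ X) = X := by
    ext z; simp only [Set.mem_diff, not_and, not_not]
    exact ⟨fun ⟨hz, h⟩ => h hz, fun hz => ⟨hXY hz, fun _ => hz⟩⟩
  have hAB : (Y \ f Y) \ (Y \ X) = X \ f Y := by
    ext z; simp only [Set.mem_diff, not_and, not_not]
    constructor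
    · rintro ⟨⟨hzY, hzf⟩, h⟩; exact ⟨h hzY, hzf⟩
    · rintro ⟨hzX, hzf⟩; exact ⟨⟨hXY hzX, hzf⟩, fun _ => hzX⟩
  rw [hYB, hAB] at hsmall
  intro x hx
  refine ⟨?_, hf X hx⟩
  by_contra hxf
  have : x ∈ (X \ f Y) ∩ f X := ⟨⟨hf X hx, hxf⟩, hx⟩
  rw [hsmall.2] at this
  exact this
end

section
/- Proposition 'Ref-Class-Mu' (6.2): if f satisfies (μRatM), then the small-set system induced by f satisfies (R↓↓). -/
/-- Proposition "Ref-Class-Mu" (6.2): if `f` satisfies (μRatM), then the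
small-set system induced by `f` satisfies (R↓↓). -/
theorem refClassMu_6_2 {U : Type*} (f : Set U → Set U) (hf : ∀ X, f X ⊆ X)
    (hRatM : ∀ X Y : Set U, X ⊆ Y → X ∩ f Y ≠ ∅ → f X ⊆ f Y ∩ X) :
    ∀ X A B : Set U, smallOf f A X → B ⊆ X → ¬ f X ⊆ B →
      smallOf f (A \ B) (X \ B) := by
  intro X A B ⟨hAX, hAfX⟩ hBX hfXB
  have hne : (X \ B) ∩ f X ≠ ∅ := by
    obtain ⟨x, hxf, hxB⟩ := Set.not_subset.mp hfXB
    intro h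
    exact absurd h (Set.nonempty_iff_ne_empty.mp ⟨x, ⟨hf X hxf, hxB⟩, hxf⟩)
  have hsub := hRatM (X \ B) X Set.diff_subset hne
  constructor
  · exact Set.diff_subset_diff_left hAX
  · ext x
    simp only [Set.mem_inter_iff, Set.mem_diff, Set.mem_empty_iff_false, iff_false]
    rintro ⟨⟨hxA, hxB⟩, hxf⟩
    have := (hsub hxf).1
    exact (Set.eq_empty_iff_forall_notMem.mp hAfX x) ⟨hxA, this⟩
end

section
/- Fact 5.1(a) (system P is too strong to capture inheritance): suppose small satisfies (I↓), (I∪), (R↑) and (R↓). If b, c, d ⊆ U satisfy small(b \ d, b) (arrow b → d: most b's are d's), small(c ∩ d, c) (arrow c ↛ d: most c's are not d's) and small(c \ b, c) (arrow c → b: most c's are b's), then small(c ∩ b, b); i.e. in the Tweety diagram the system-P rules force the conclusion 'most b's are not c's', although the diagram contains no link from b to c. -/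
/-- Fact 5.1(a) (system P is too strong to capture inheritance): suppose `small`
satisfies (I↓), (I∪), (R↑) and (R↓).  If `b, c, d ⊆ U` satisfy
`small (b \ d) b` (arrow `b → d`), `small (c ∩ d) c` (arrow `c ↛ d`) and
`small (c \ b) c` (arrow `c → b`), then `small (c ∩ b) b`; i.e. in the Tweety
diagram the system-P rules force the conclusion "most `b`'s are not `c`'s",
although the diagram contains no link from `b` to `c`. -/
theorem systemP_too_strong {U : Type*} (small : Set U → Set U → Prop)
    (hIdown : ∀ A' A X : Set U, A' ⊆ A → small A X → small A' X)
    (hIcup : ∀ A B X : Set U, small A X → small B X → small (A ∪ B) X)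
    (hRup : ∀ A X Y : Set U, X ⊆ Y → small A X → small A Y)
    (hRdown : ∀ A B X : Set U, small A X → small B X → small (A \ B) (X \ B))
    (b c d : Set U)
    (hbd : small (b \ d) b) (hcd : small (c ∩ d) c) (hcb : small (c \ b) c) :
    small (c ∩ b) b := by
  have h1 : small ((c ∩ d) \ (c \ b)) (c \ (c \ b)) := hRdown _ _ _ hcd hcb
  have h2 : small (c ∩ d ∩ b) (c ∩ b) := by
    have e1 : (c ∩ d) \ (c \ b) = c ∩ d ∩ b := by ext x; simp only [Set.mem_diff, Set.mem_inter_iff]; tauto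
    have e2 : c \ (c \ b) = c ∩ b := by ext x; simp only [Set.mem_diff, Set.mem_inter_iff]; tauto
    rwa [e1, e2] at h1
  have h3 : small (c ∩ d ∩ b) b := hRup _ _ _ (Set.inter_subset_right) h2
  have h4 : small ((b \ d) ∪ (c ∩ d ∩ b)) b := hIcup _ _ _ hbd h3
  refine hIdown _ _ _ ?_ h4
  intro x ⟨hxc, hxb⟩
  by_cases hxd : x ∈ d
  · exact Or.inr ⟨⟨hxc, hxd⟩, hxb⟩
  · exact Or.inl ⟨hxb, hxd⟩
end

section
/- Weak filters and (R↓) do not cooperate: if small satisfies (R↓) and the weak-ideal condition (I∪'), then no nonempty X ⊆ U can be written as a union X = A ∪ B ∪ C of three pairwise disjoint sets A, B, C each of which is small in X. -/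
/-- Weak filters and (R↓) do not cooperate: if `small` satisfies (R↓) and the
weak-ideal condition (I∪'), then no nonempty `X ⊆ U` can be written as a union
`X = A ∪ B ∪ C` of three pairwise disjoint sets `A, B, C` each of which is
small in `X`. -/
theorem rDown_weakIdeal_incompatible {U : Type*} (small : Set U → Set U → Prop)
    (hRdown : ∀ A B X : Set U, small A X → small B X → small (A \ B) (X \ B))
    (hIcup' : ∀ A B X : Set U, X ≠ ∅ → small A X → small B X → A ∪ B ≠ X) :
    ∀ X A B C : Set U, X ≠ ∅ →
      A ∩ B = ∅ → A ∩ C = ∅ → B ∩ C = ∅ →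
      X = A ∪ B ∪ C →
      small A X → small B X → small C X → False := by
  intro X A B C hX hAB hAC hBC hXeq hA hB hC
  have hAC' : A \ C = A := by
    ext x; simp only [Set.mem_diff, and_iff_left_iff_imp]
    intro hx hxc
    exact Set.eq_empty_iff_forall_notMem.mp hAC x ⟨hx, hxc⟩
  have hBC' : B \ C = B := by
    ext x; simp only [Set.mem_diff, and_iff_left_iff_imp]
    intro hx hxc
    exact Set.eq_empty_iff_forall_notMem.mp hBC x ⟨hx, hxc⟩
  have hXC : X \ C = A ∪ B := by
    subst hXeq
    ext x
    simp only [Set.mem_diff, Set.mem_union]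
    constructor
    · rintro ⟨(h | h) | h, hc⟩
      · exact Or.inl h
      · exact Or.inr h
      · exact absurd h hc
    · rintro (h | h)
      · exact ⟨Or.inl (Or.inl h), fun hc =>
          Set.eq_empty_iff_forall_notMem.mp hAC x ⟨h, hc⟩⟩
      · exact ⟨Or.inl (Or.inr h), fun hc =>
          Set.eq_empty_iff_forall_notMem.mp hBC x ⟨h, hc⟩⟩
  have hA' : small A (A ∪ B) := by
    have := hRdown A C X hA hC
    rwa [hAC', hXC] at this
  have hB' : small B (A ∪ B) := by
    have := hRdown B C X hB hC
    rwa [hBC', hXC] at this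
  by_cases hABe : A ∪ B = (∅ : Set U)
  · -- then X = C
    have hXC' : X = C := by
      rw [hXeq, hABe, Set.empty_union]
    exact hIcup' C C X hX (hXC' ▸ hC) (hXC' ▸ hC) (by rw [Set.union_self, hXC'])
  · exact hIcup' A B (A ∪ B) hABe hA' hB' rfl
end
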